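/- Let γ : [a,b] → ℝⁿ be a C² curve with |γ′(t)| = 1 and |γ″(t)| ≤ M₁ for all t, and suppose M₂|t₁ − t₂| ≤ |γ(t₁) − γ(t₂)| for all t₁, t₂ ∈ [a,b]. For t ∈ [a,b] let D_μ(t) be the (n−1)-dimensional disk of radius μ centered at γ(t) in the hyperplane through γ(t) normal to γ′(t), and let N_μ = ∪_{t∈[a,b]} D_μ(t). Then there exist μ₀ > 0 and C > 0 depending only on M₁, M₂, n such that for all 0 < μ ≤ μ₀, the n-dimensional Lebesgue measure of N_μ satisfies Hⁿ(N_μ) ≥ C μ^{n−1} |γ(b) − γ(a)|. -/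

import Mathlib

open scoped RealInnerProductSpace ENNReal
open MeasureTheory

lemma tube_box_eq (n : ℕ) (r : Fin n → ℝ) :
    {y : EuclideanSpace ℝ (Fin n) | ∀ i, |y i| ≤ r i}
      = (MeasurableEquiv.toLp 2 (Fin n → ℝ)).symm ⁻¹'
        (Set.univ.pi fun i => Set.Icc (-(r i)) (r i)) := by
  ext y
  simp [abs_le, MeasurableEquiv.coe_toLp_symm, Set.mem_pi, and_comm, Pi.le_def,
    forall_and]

lemma tube_box_measurable (n : ℕ) (r : Fin n → ℝ) :
    MeasurableSet {y : EuclideanSpace ℝ (Fin n) | ∀ i, |y i| ≤ r i} := by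
  rw [tube_box_eq]
  exact (MeasurableEquiv.toLp 2 (Fin n → ℝ)).symm.measurable
    (MeasurableSet.univ_pi fun i => measurableSet_Icc)

lemma tube_box_volume (n : ℕ) (r : Fin n → ℝ) :
    volume {y : EuclideanSpace ℝ (Fin n) | ∀ i, |y i| ≤ r i}
      = ∏ i, ENNReal.ofReal (2 * r i) := by
  rw [tube_box_eq, (EuclideanSpace.volume_preserving_symm_measurableEquiv_toLp (Fin n)).measure_preimage
      (MeasurableSet.univ_pi fun i => measurableSet_Icc).nullMeasurableSet,
    volume_pi_pi]
  simp [Real.volume_Icc]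
  congr 1
  ext i
  congr 1
  ring_nf
  rw [ENNReal.ofReal_mul' (by norm_num)]
  norm_num

lemma tube_cyl_lemma (m : ℕ) (z e : EuclideanSpace ℝ (Fin (m+1))) (he : ‖e‖ = 1)
    (α β : ℝ) (hα : 0 ≤ α) (hβ : 0 ≤ β) :
    ∃ S : Set (EuclideanSpace ℝ (Fin (m+1))), MeasurableSet S ∧
      ENNReal.ofReal ((2*α) * (2*β/Real.sqrt (m+1))^m) ≤ volume S ∧
      ∀ x ∈ S, |⟪x - z, e⟫| ≤ α ∧ ‖(x - z) - ⟪x - z, e⟫ • e‖ ≤ β ∧ ‖x - z‖ ≤ α + β := by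
  have hon : Orthonormal ℝ (({0} : Set (Fin (m+1))).restrict (fun _ => e)) := by
    rw [orthonormal_iff_ite]
    intro i j
    have hij : i = j := by
      apply Subtype.ext
      have h1 : (i : Fin (m+1)) = 0 := i.2
      have h2 : (j : Fin (m+1)) = 0 := j.2
      rw [h1, h2]
    subst hij
    rw [if_pos rfl]
    show ⟪e, e⟫ = 1
    rw [real_inner_self_eq_norm_mul_norm, he]
    norm_num
  obtain ⟨B, hB⟩ := hon.exists_orthonormalBasis_extension_of_card_eq
    (by simp [finrank_euclideanSpace])
  have hB0 : B 0 = e := hB 0 rfl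
  set r : Fin (m+1) → ℝ := fun i => if i = 0 then α else β / Real.sqrt (m+1) with hr
  set φ : EuclideanSpace ℝ (Fin (m+1)) → EuclideanSpace ℝ (Fin (m+1)) :=
    fun x => B.repr (x - z) with hφ
  have hφmp : MeasurePreserving φ := by
    exact (B.repr.measurePreserving).comp (measurePreserving_sub_right volume z)
  refine ⟨φ ⁻¹' {y | ∀ i, |y i| ≤ r i}, hφmp.measurable (tube_box_measurable _ r), ?_, ?_⟩
  · rw [hφmp.measure_preimage (tube_box_measurable _ r).nullMeasurableSet, tube_box_volume]
    rw [Fin.prod_univ_succ]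
    have h1 : ∀ i : Fin m, r i.succ = β / Real.sqrt (m+1) := by
      intro i; simp [hr, Fin.succ_ne_zero]
    simp only [h1]
    rw [Finset.prod_const]
    have : r 0 = α := by simp [hr]
    rw [this]
    simp only [Finset.card_univ, Fintype.card_fin]
    rw [ENNReal.ofReal_mul (by positivity), ← ENNReal.ofReal_pow (by positivity)]
    apply le_of_eq
    congr 2
    ring
  · intro x hx
    set y := φ x with hy
    have hinner : ⟪x - z, e⟫ = y 0 := by
      rw [hy]
      show ⟪x - z, e⟫ = B.repr (x - z) 0
      rw [B.repr_apply_apply, hB0, real_inner_comm]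
    have h0 : |⟪x - z, e⟫| ≤ α := by
      rw [hinner]
      have := hx 0
      simpa [hr] using this
    refine ⟨h0, ?_, ?_⟩
    · have hperp : ‖(x - z) - ⟪x - z, e⟫ • e‖
          = ‖(B.repr (x - z) : EuclideanSpace ℝ (Fin (m+1))) - ⟪x - z, e⟫ • B.repr e‖ := by
        rw [← LinearIsometryEquiv.norm_map B.repr]
        simp
      rw [hperp, ← hB0, B.repr_self, hB0]
      have hnorm : ∀ w : EuclideanSpace ℝ (Fin (m+1)),
          (∀ i, |w i| ≤ β / Real.sqrt (m+1)) → ‖w‖ ≤ β := by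
        intro w hw
        rw [EuclideanSpace.norm_eq]
        simp only [Real.norm_eq_abs, sq_abs]
        have hsum : ∑ i, w i ^ 2 ≤ β ^ 2 := by
          calc ∑ i, w i ^ 2 ≤ ∑ _i : Fin (m+1), (β / Real.sqrt (m+1))^2 := by
                apply Finset.sum_le_sum
                intro i _
                have := hw i
                nlinarith [abs_nonneg (w i), sq_abs (w i), this]
            _ = (m+1) * (β / Real.sqrt (m+1))^2 := by
                rw [Finset.sum_const]
                simp only [Finset.card_univ, Fintype.card_fin, nsmul_eq_mul]
                push_cast
                ring
            _ = β ^ 2 := by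
                rw [div_pow, Real.sq_sqrt (by positivity)]
                field_simp
        calc Real.sqrt (∑ i, w i ^ 2) ≤ Real.sqrt (β ^ 2) := Real.sqrt_le_sqrt hsum
          _ = β := Real.sqrt_sq hβ
      apply hnorm
      intro i
      by_cases hi : i = 0
      · subst hi
        have hz : (B.repr (x - z) - ⟪x - z, e⟫ • EuclideanSpace.single 0 1 :
            EuclideanSpace ℝ (Fin (m+1))) 0 = 0 := by
          simp [EuclideanSpace.single_apply, hinner, hy, hφ]
        rw [hz]
        simp only [abs_zero]
        positivity
      · have h3 := hx i
        rw [hr] at h3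
        simp only [if_neg hi] at h3
        simpa [EuclideanSpace.single_apply, hi, hφ] using h3
    · -- ‖x - z‖ ≤ α + β
      have hdecomp : x - z = ((x - z) - ⟪x - z, e⟫ • e) + ⟪x - z, e⟫ • e := by abel
      have hperp2 : ‖(x - z) - ⟪x - z, e⟫ • e‖ ≤ β := by
        have hperp : ‖(x - z) - ⟪x - z, e⟫ • e‖
            = ‖(B.repr (x - z) : EuclideanSpace ℝ (Fin (m+1))) - ⟪x - z, e⟫ • B.repr e‖ := by
          rw [← LinearIsometryEquiv.norm_map B.repr]
          simp
        rw [hperp, ← hB0, B.repr_self, hB0]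
        have hnorm : ∀ w : EuclideanSpace ℝ (Fin (m+1)),
            (∀ i, |w i| ≤ β / Real.sqrt (m+1)) → ‖w‖ ≤ β := by
          intro w hw
          rw [EuclideanSpace.norm_eq]
          simp only [Real.norm_eq_abs, sq_abs]
          have hsum : ∑ i, w i ^ 2 ≤ β ^ 2 := by
            calc ∑ i, w i ^ 2 ≤ ∑ _i : Fin (m+1), (β / Real.sqrt (m+1))^2 := by
                  apply Finset.sum_le_sum
                  intro i _
                  have := hw i
                  nlinarith [abs_nonneg (w i), sq_abs (w i), this]
              _ = (m+1) * (β / Real.sqrt (m+1))^2 := by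
                  rw [Finset.sum_const]
                  simp only [Finset.card_univ, Fintype.card_fin, nsmul_eq_mul]
                  push_cast
                  ring
              _ = β ^ 2 := by
                  rw [div_pow, Real.sq_sqrt (by positivity)]
                  field_simp
          calc Real.sqrt (∑ i, w i ^ 2) ≤ Real.sqrt (β ^ 2) := Real.sqrt_le_sqrt hsum
            _ = β := Real.sqrt_sq hβ
        apply hnorm
        intro i
        by_cases hi : i = 0
        · subst hi
          have hz : (B.repr (x - z) - ⟪x - z, e⟫ • EuclideanSpace.single 0 1 :
              EuclideanSpace ℝ (Fin (m+1))) 0 = 0 := by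
            simp [EuclideanSpace.single_apply, hinner, hy, hφ]
          rw [hz]
          simp only [abs_zero]
          positivity
        · have h3 := hx i
          rw [hr] at h3
          simp only [if_neg hi] at h3
          simpa [EuclideanSpace.single_apply, hi, hφ] using h3
      calc ‖x - z‖ = ‖((x - z) - ⟪x - z, e⟫ • e) + ⟪x - z, e⟫ • e‖ := by rw [← hdecomp]
        _ ≤ ‖(x - z) - ⟪x - z, e⟫ • e‖ + ‖⟪x - z, e⟫ • e‖ := norm_add_le _ _
        _ ≤ β + |⟪x - z, e⟫| * ‖e‖ := by rw [norm_smul, Real.norm_eq_abs]; gcongr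
        _ ≤ β + α * 1 := by rw [he]; gcongr
        _ = α + β := by ring

lemma tube_curve_lip (n : ℕ) (a b : ℝ) (γ γ' : ℝ → EuclideanSpace ℝ (Fin n))
    (hγ : ∀ t ∈ Set.Icc a b, HasDerivAt γ (γ' t) t)
    (hunit : ∀ t ∈ Set.Icc a b, ‖γ' t‖ = 1) :
    ∀ t ∈ Set.Icc a b, ∀ s ∈ Set.Icc a b, ‖γ t - γ s‖ ≤ |t - s| := by
  intro t ht s hs
  have := Convex.norm_image_sub_le_of_norm_hasDerivWithin_le
    (f := γ) (f' := γ') (s := Set.Icc a b) (C := 1)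
    (fun u hu => (hγ u hu).hasDerivWithinAt)
    (fun u hu => le_of_eq (hunit u hu)) (convex_Icc a b) hs ht
  simpa [Real.norm_eq_abs] using this

lemma tube_slab_lemma (n : ℕ) (M₁ : ℝ) (a b c δ μ : ℝ)
    (γ γ' γ'' : ℝ → EuclideanSpace ℝ (Fin n))
    (hγ : ∀ t ∈ Set.Icc a b, HasDerivAt γ (γ' t) t)
    (hγ' : ∀ t ∈ Set.Icc a b, HasDerivAt γ' (γ'' t) t)
    (hunit : ∀ t ∈ Set.Icc a b, ‖γ' t‖ = 1)
    (hcurv : ∀ t ∈ Set.Icc a b, ‖γ'' t‖ ≤ M₁)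
    (hpq : Set.Icc (c - δ) (c + δ) ⊆ Set.Icc a b) (hδ : 0 ≤ δ)
    (hμ : 0 < μ) (hlen : 2*δ ≤ 2*μ/3) (hμM : μ * M₁ ≤ 3/32)
    (x : EuclideanSpace ℝ (Fin n))
    (h1 : |⟪x - γ c, γ' c⟫| ≤ δ/2)
    (h2 : ‖(x - γ c) - ⟪x - γ c, γ' c⟫ • γ' c‖ ≤ μ/2) :
    ∃ t ∈ Set.Icc (c - δ) (c + δ), ‖x - γ t‖ ≤ μ ∧ ⟪x - γ t, γ' t⟫ = 0 := by
  have hple : c - δ ≤ c + δ := by linarith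
  have hcmem : c ∈ Set.Icc (c - δ) (c + δ) := ⟨by linarith, by linarith⟩
  have hcab : c ∈ Set.Icc a b := hpq hcmem
  have hxc : ‖x - γ c‖ ≤ δ/2 + μ/2 := by
    have hdecomp : x - γ c = ((x - γ c) - ⟪x - γ c, γ' c⟫ • γ' c) + ⟪x - γ c, γ' c⟫ • γ' c := by
      abel
    calc ‖x - γ c‖ = ‖((x - γ c) - ⟪x - γ c, γ' c⟫ • γ' c) + ⟪x - γ c, γ' c⟫ • γ' c‖ := by
          rw [← hdecomp]
      _ ≤ ‖(x - γ c) - ⟪x - γ c, γ' c⟫ • γ' c‖ + ‖⟪x - γ c, γ' c⟫ • γ' c‖ := norm_add_le _ _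
      _ ≤ μ/2 + |⟪x - γ c, γ' c⟫| * ‖γ' c‖ := by
          rw [norm_smul, Real.norm_eq_abs]; gcongr
      _ ≤ μ/2 + δ/2 * 1 := by
          rw [hunit c hcab]; gcongr
      _ = δ/2 + μ/2 := by ring
  have hlip := tube_curve_lip n a b γ γ' hγ hunit
  have hxt : ∀ t ∈ Set.Icc (c - δ) (c + δ), ‖x - γ t‖ ≤ μ := by
    intro t ht
    have h3 : ‖γ c - γ t‖ ≤ |c - t| := hlip c hcab t (hpq ht)
    have h4 : |c - t| ≤ δ := by
      rw [abs_le]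
      cases' ht with ht1 ht2
      constructor <;> linarith
    calc ‖x - γ t‖ = ‖(x - γ c) + (γ c - γ t)‖ := by abel_nf
      _ ≤ ‖x - γ c‖ + ‖γ c - γ t‖ := norm_add_le _ _
      _ ≤ (δ/2 + μ/2) + δ := by gcongr; linarith [h3, h4]
      _ ≤ μ := by linarith
  set g : ℝ → ℝ := fun t => ⟪x - γ t, γ' t⟫ with hgdef
  have hg : ∀ t ∈ Set.Icc a b,
      HasDerivAt g (⟪x - γ t, γ'' t⟫ + ⟪-γ' t, γ' t⟫) t := by
    intro t ht
    have hsub : HasDerivAt (fun s => x - γ s) (-γ' t) t := by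
      have := (hasDerivAt_const t x).sub (hγ t ht)
      simp only [zero_sub] at this
      exact this
    exact HasDerivAt.inner ℝ hsub (hγ' t ht)
  have hgcont : ContinuousOn g (Set.Icc (c - δ) (c + δ)) := fun t ht =>
    (hg t (hpq ht)).continuousAt.continuousWithinAt
  have hanti : AntitoneOn (fun t => g t + (29/32) * t) (Set.Icc (c - δ) (c + δ)) := by
    apply antitoneOn_of_deriv_nonpos (convex_Icc _ _)
    · exact hgcont.add (continuousOn_const.mul continuousOn_id)
    · intro t ht
      rw [interior_Icc] at ht
      have htpq : t ∈ Set.Icc (c - δ) (c + δ) := Set.Ioo_subset_Icc_self ht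
      exact ((hg t (hpq htpq)).add
        ((hasDerivAt_id t).const_mul (29/32 : ℝ))).differentiableAt.differentiableWithinAt
    · intro t ht
      rw [interior_Icc] at ht
      have htpq : t ∈ Set.Icc (c - δ) (c + δ) := Set.Ioo_subset_Icc_self ht
      have htab := hpq htpq
      have hD : HasDerivAt (fun t => g t + (29/32) * t)
          ((⟪x - γ t, γ'' t⟫ + ⟪-γ' t, γ' t⟫) + (29/32) * 1) t :=
        (hg t htab).add ((hasDerivAt_id t).const_mul (29/32 : ℝ))
      rw [hD.deriv]
      have e1 : ⟪-γ' t, γ' t⟫ = -1 := by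
        rw [inner_neg_left, real_inner_self_eq_norm_mul_norm, hunit t htab]
        norm_num
      have e2 : ⟪x - γ t, γ'' t⟫ ≤ μ * M₁ := by
        calc ⟪x - γ t, γ'' t⟫ ≤ ‖x - γ t‖ * ‖γ'' t‖ := real_inner_le_norm _ _
          _ ≤ μ * M₁ := by
              apply mul_le_mul (hxt t htpq) (hcurv t htab) (norm_nonneg _)
              exact hμ.le
      rw [e1]
      linarith
  have habs := abs_le.1 h1
  have hgp : 0 ≤ g (c - δ) := by
    have := hanti ⟨le_refl _, hple⟩ hcmem (by linarith : c - δ ≤ c)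
    simp only at this
    nlinarith [habs.1, habs.2]
  have hgq : g (c + δ) ≤ 0 := by
    have := hanti hcmem ⟨hple, le_refl _⟩ (by linarith : c ≤ c + δ)
    simp only at this
    nlinarith [habs.1, habs.2]
  have hIVT := intermediate_value_Icc' hple hgcont
  have h0mem : (0:ℝ) ∈ Set.Icc (g (c + δ)) (g (c - δ)) := ⟨hgq, hgp⟩
  obtain ⟨t, ht, hgt⟩ := hIVT h0mem
  exact ⟨t, ht, hxt t ht, hgt⟩

set_option maxHeartbeats 1000000

/-- Tube lemma: the union of small normal disks of radius `μ` along a unit-speed bi-Lipschitz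
curve with bounded curvature has `n`-dimensional measure at least `C μ^(n−1)` times the chord
length, with constants depending only on `M₁`, `M₂` and `n`. -/
theorem normal_tube_measure_lower_bound (n : ℕ) (M₁ M₂ : ℝ) (hM₁ : 0 < M₁) (hM₂ : 0 < M₂) :
    ∃ μ₀ > (0 : ℝ), ∃ C > (0 : ℝ),
      ∀ (a b : ℝ), a < b →
      ∀ (γ γ' γ'' : ℝ → EuclideanSpace ℝ (Fin n)),
        (∀ t ∈ Set.Icc a b, HasDerivAt γ (γ' t) t) →
        (∀ t ∈ Set.Icc a b, HasDerivAt γ' (γ'' t) t) →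
        (∀ t ∈ Set.Icc a b, ‖γ' t‖ = 1) →
        (∀ t ∈ Set.Icc a b, ‖γ'' t‖ ≤ M₁) →
        (∀ t₁ ∈ Set.Icc a b, ∀ t₂ ∈ Set.Icc a b, M₂ * |t₁ - t₂| ≤ ‖γ t₁ - γ t₂‖) →
        ∀ μ : ℝ, 0 < μ → μ ≤ μ₀ →
          C * μ ^ (n - 1) * ‖γ b - γ a‖ ≤
            (MeasureTheory.volume (⋃ t ∈ Set.Icc a b,
              {y : EuclideanSpace ℝ (Fin n) |
                ‖y - γ t‖ ≤ μ ∧ ⟪y - γ t, γ' t⟫ = 0})).toReal := by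
  obtain _ | m := n
  · refine ⟨1, one_pos, 1, one_pos, ?_⟩
    intro a b hab γ γ' γ'' _ _ _ _ _ μ hμ hμ₀
    have hnorm : ‖γ b - γ a‖ = 0 := by
      simp [EuclideanSpace.norm_eq]
    rw [hnorm, mul_zero]
    exact ENNReal.toReal_nonneg
  refine ⟨3/(32*M₁), by positivity,
    min (1/4) (M₂/12) / ((m+1:ℝ)+1)^(m+1),
    div_pos (lt_min (by norm_num) (div_pos hM₂ (by norm_num))) (by positivity), ?_⟩
  intro a b hab γ γ' γ'' hγ hγ' hunit hcurv hbilip μ hμ hμ₀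
  have hμM : μ * M₁ ≤ 3/32 := by
    rw [le_div_iff₀ (by positivity)] at hμ₀
    nlinarith
  have hK0 : (0:ℝ) < min (1/4) (M₂/12) := lt_min (by norm_num) (div_pos hM₂ (by norm_num))
  have hK4 : min (1/4 : ℝ) (M₂/12) ≤ 1/4 := min_le_left _ _
  have hK12 : min (1/4 : ℝ) (M₂/12) ≤ M₂/12 := min_le_right _ _
  have hs0 : (0:ℝ) < (Real.sqrt (m+1))^m := by positivity
  have hs1 : (Real.sqrt (m+1))^m ≤ ((m+1:ℝ)+1)^(m+1) := by
    have h1 : Real.sqrt (m+1) ≤ (m+1:ℝ)+1 := by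
      rw [show ((m+1:ℝ)+1) = Real.sqrt (((m+1:ℝ)+1)^2) by rw [Real.sqrt_sq (by positivity)]]
      apply Real.sqrt_le_sqrt
      nlinarith [Nat.cast_nonneg (α := ℝ) m]
    calc (Real.sqrt (m+1))^m ≤ ((m+1:ℝ)+1)^m := pow_le_pow_left₀ (Real.sqrt_nonneg _) h1 m
      _ ≤ ((m+1:ℝ)+1)^(m+1) := pow_le_pow_right₀ (by push_cast; linarith [Nat.cast_nonneg (α := ℝ) m]) (Nat.le_succ m)
  have hC : min (1/4) (M₂/12) / ((m+1:ℝ)+1)^(m+1)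
      ≤ min (1/4) (M₂/12) / (Real.sqrt (m+1))^m := by
    apply div_le_div_of_nonneg_left hK0.le hs0 hs1
  have hlip := tube_curve_lip (m+1) a b γ γ' hγ hunit
  have hchord : ‖γ b - γ a‖ ≤ b - a := by
    have := hlip b (Set.right_mem_Icc.2 hab.le) a (Set.left_mem_Icc.2 hab.le)
    rwa [abs_of_nonneg (by linarith)] at this
  set N := ⋃ t ∈ Set.Icc a b, {y : EuclideanSpace ℝ (Fin (m+1)) |
      ‖y - γ t‖ ≤ μ ∧ ⟪y - γ t, γ' t⟫ = 0} with hN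
  have hNball : N ⊆ Metric.closedBall (γ a) ((b - a) + μ) := by
    intro y hy
    rw [hN] at hy
    simp only [Set.mem_iUnion, Set.mem_setOf_eq] at hy
    obtain ⟨t, ht, hy1, hy2⟩ := hy
    rw [Metric.mem_closedBall, dist_eq_norm]
    have h5 : ‖γ t - γ a‖ ≤ |t - a| := hlip t ht a (Set.left_mem_Icc.2 hab.le)
    have h6 : |t - a| ≤ b - a := by
      rw [abs_of_nonneg (by linarith [ht.1])]
      linarith [ht.2]
    calc ‖y - γ a‖ = ‖(y - γ t) + (γ t - γ a)‖ := by abel_nf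
      _ ≤ ‖y - γ t‖ + ‖γ t - γ a‖ := norm_add_le _ _
      _ ≤ (b - a) + μ := by linarith
  have hNfin : volume N ≠ ⊤ :=
    ((measure_mono hNball).trans_lt measure_closedBall_lt_top).ne
  simp only [Nat.add_sub_cancel]
  rw [← ENNReal.ofReal_le_iff_le_toReal hNfin]
  by_cases hcase : b - a ≤ 2*μ/3
  · -- short curve: single slab
    obtain ⟨S, hSm, hSv, hSp⟩ := tube_cyl_lemma m (γ ((a+b)/2)) (γ' ((a+b)/2))
      (hunit _ ⟨by linarith, by linarith⟩) ((b-a)/4) (μ/2) (by linarith) (by linarith)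
    have hSN : S ⊆ N := by
      intro x hx
      obtain ⟨hx1, hx2, _⟩ := hSp x hx
      obtain ⟨t, ht, h3, h4⟩ := tube_slab_lemma (m+1) M₁ a b ((a+b)/2) ((b-a)/2) μ γ γ' γ''
        hγ hγ' hunit hcurv
        (Set.Icc_subset_Icc (by linarith) (by linarith))
        (by linarith) hμ (by linarith) hμM x
        (by rw [show ((b-a)/2)/2 = (b-a)/4 by ring]; exact hx1) hx2
      have htab : t ∈ Set.Icc a b :=
        Set.Icc_subset_Icc (by linarith) (by linarith) ht
      rw [hN]
      simp only [Set.mem_iUnion, Set.mem_setOf_eq]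
      exact ⟨t, htab, h3, h4⟩
    refine le_trans ?_ (le_trans hSv (measure_mono hSN))
    apply ENNReal.ofReal_le_ofReal
    have hrw : (2*((b-a)/4)) * (2*(μ/2)/Real.sqrt (m+1))^m
        = ((b-a)/2) * (μ^m / (Real.sqrt (m+1))^m) := by
      rw [show (2*(μ/2) : ℝ) = μ by ring, div_pow]
      ring
    rw [hrw]
    have hKhalf : min (1/4 : ℝ) (M₂/12) ≤ 1/2 := hK4.trans (by norm_num)
    have h7 : min (1/4 : ℝ) (M₂/12) * μ^m * (b-a) ≤ ((b-a)/2) * μ^m := by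
      nlinarith [mul_nonneg (pow_nonneg hμ.le m) (by linarith : (0:ℝ) ≤ b - a)]
    calc min (1/4) (M₂/12) / ((m+1:ℝ)+1)^(m+1) * μ ^ m * ‖γ b - γ a‖
        ≤ min (1/4) (M₂/12) / (Real.sqrt (m+1))^m * μ ^ m * (b - a) := by
          apply mul_le_mul (mul_le_mul hC le_rfl (pow_nonneg hμ.le m)
            (div_nonneg hK0.le hs0.le)) hchord (norm_nonneg _)
            (mul_nonneg (div_nonneg hK0.le hs0.le) (pow_nonneg hμ.le m))
      _ = (min (1/4 : ℝ) (M₂/12) * μ^m * (b-a)) / (Real.sqrt (m+1))^m := by ring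
      _ ≤ (((b-a)/2) * μ^m) / (Real.sqrt (m+1))^m := (div_le_div_iff_of_pos_right hs0).2 h7
      _ = ((b-a)/2) * (μ^m / (Real.sqrt (m+1))^m) := by ring
  · -- long curve: many disjoint slabs
    push_neg at hcase
    have hba : 0 < b - a := by linarith
    have hX0 : 0 ≤ (b - a - 2*μ/3) * M₂ / (2*μ) :=
      div_nonneg (mul_nonneg (by linarith) hM₂.le) (by positivity)
    set k : ℕ := Nat.floor ((b - a - 2*μ/3) * M₂ / (2*μ)) + 1 with hk
    have hk1 : 1 ≤ k := Nat.le_add_left 1 _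
    have hkX : ((k:ℝ) - 1) ≤ (b - a - 2*μ/3) * M₂ / (2*μ) := by
      rw [hk]
      push_cast
      simpa using Nat.floor_le hX0
    have hkX2 : (b - a - 2*μ/3) * M₂ / (2*μ) < k := by
      rw [hk]
      push_cast
      exact Nat.lt_floor_add_one _
    set cc : ℕ → ℝ := fun i => a + μ/3 + (2*μ/M₂) * i with hcc
    have hccab : ∀ i : ℕ, i < k → Set.Icc (cc i - μ/3) (cc i + μ/3) ⊆ Set.Icc a b := by
      intro i hi
      have hi' : (i:ℝ) ≤ (k:ℝ) - 1 := by
        have h8 : (i:ℝ) + 1 ≤ k := by exact_mod_cast Nat.succ_le_of_lt hi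
        linarith
      have h9 : (2*μ/M₂) * i ≤ b - a - 2*μ/3 := by
        have h10 : (2*μ/M₂) * i ≤ (2*μ/M₂) * ((b - a - 2*μ/3) * M₂ / (2*μ)) :=
          mul_le_mul_of_nonneg_left (hi'.trans hkX) (by positivity)
        have h11 : (2*μ/M₂) * ((b - a - 2*μ/3) * M₂ / (2*μ)) = b - a - 2*μ/3 := by
          field_simp
        linarith
      have h12 : 0 ≤ (2*μ/M₂) * i :=
        mul_nonneg (by positivity) (Nat.cast_nonneg i)
      apply Set.Icc_subset_Icc
      · rw [hcc]
        simp only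
        linarith
      · rw [hcc]
        simp only
        linarith
    have hccmem : ∀ i : ℕ, i < k → cc i ∈ Set.Icc a b := fun i hi =>
      hccab i hi ⟨by linarith, by linarith⟩
    have hcylall : ∀ i : Fin k, ∃ S : Set (EuclideanSpace ℝ (Fin (m+1))),
        MeasurableSet S ∧
        ENNReal.ofReal ((2*(μ/6)) * (2*(μ/2)/Real.sqrt (m+1))^m) ≤ volume S ∧
        ∀ x ∈ S, |⟪x - γ (cc i), γ' (cc i)⟫| ≤ μ/6 ∧
          ‖(x - γ (cc i)) - ⟪x - γ (cc i), γ' (cc i)⟫ • γ' (cc i)‖ ≤ μ/2 ∧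
          ‖x - γ (cc i)‖ ≤ μ/6 + μ/2 :=
      fun i => tube_cyl_lemma m (γ (cc i)) (γ' (cc i))
        (hunit _ (hccmem i i.2)) (μ/6) (μ/2) (by linarith) (by linarith)
    choose S hSm hSv hSp using hcylall
    have hSN : ∀ i : Fin k, S i ⊆ N := by
      intro i x hx
      obtain ⟨hx1, hx2, _⟩ := hSp i x hx
      obtain ⟨t, ht, h3, h4⟩ := tube_slab_lemma (m+1) M₁ a b (cc i) (μ/3) μ γ γ' γ''
        hγ hγ' hunit hcurv (hccab i i.2) (by linarith) hμ (by linarith) hμM x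
        (by rw [show (μ/3)/2 = μ/6 by ring]; exact hx1) hx2
      rw [hN]
      simp only [Set.mem_iUnion, Set.mem_setOf_eq]
      exact ⟨t, hccab i i.2 ht, h3, h4⟩
    have hdisj : ∀ i j : Fin k, i ≠ j → Disjoint (S i) (S j) := by
      intro i j hij
      rw [Set.disjoint_left]
      intro x hxi hxj
      have hi3 := (hSp i x hxi).2.2
      have hj3 := (hSp j x hxj).2.2
      have hone : (1:ℝ) ≤ |(i:ℝ) - (j:ℝ)| := by
        have hne : ((i:ℕ):ℤ) ≠ ((j:ℕ):ℤ) := by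
          intro h
          exact hij (Fin.ext (by exact_mod_cast h))
        have h1 : (1:ℤ) ≤ |((i:ℕ):ℤ) - ((j:ℕ):ℤ)| := Int.one_le_abs (sub_ne_zero.2 hne)
        calc (1:ℝ) = ((1:ℤ):ℝ) := by norm_num
          _ ≤ |(((i:ℕ):ℤ) - ((j:ℕ):ℤ) : ℤ)| := by exact_mod_cast h1
          _ = |(i:ℝ) - (j:ℝ)| := by push_cast; ring_nf
      have hdd : |(cc i : ℝ) - cc j| = (2*μ/M₂) * |(i:ℝ) - (j:ℝ)| := by
        rw [hcc]
        simp only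
        rw [show a + μ/3 + 2*μ/M₂*(i:ℝ) - (a + μ/3 + 2*μ/M₂*(j:ℝ))
          = 2*μ/M₂*((i:ℝ)-(j:ℝ)) by ring]
        rw [abs_mul, abs_of_nonneg (by positivity : (0:ℝ) ≤ 2*μ/M₂)]
      have hdist : 2*μ ≤ ‖γ (cc i) - γ (cc j)‖ := by
        have hb := hbilip (cc i) (hccmem i i.2) (cc j) (hccmem j j.2)
        have hstep : 2*μ ≤ M₂ * |(cc i : ℝ) - cc j| := by
          rw [hdd]
          have h13 : M₂ * ((2*μ/M₂) * 1) ≤ M₂ * ((2*μ/M₂) * |(i:ℝ) - (j:ℝ)|) :=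
            mul_le_mul_of_nonneg_left
              (mul_le_mul_of_nonneg_left hone (by positivity)) hM₂.le
          have h14 : M₂ * ((2*μ/M₂) * 1) = 2*μ := by
            rw [mul_one]
            field_simp
          linarith
        linarith
      have htri : ‖γ (cc i) - γ (cc j)‖ ≤ (μ/6+μ/2) + (μ/6+μ/2) := by
        have hrev : ‖γ (cc i) - x‖ = ‖x - γ (cc i)‖ := norm_sub_rev _ _
        calc ‖γ (cc i) - γ (cc j)‖ = ‖(γ (cc i) - x) + (x - γ (cc j))‖ := by abel_nf
          _ ≤ ‖γ (cc i) - x‖ + ‖x - γ (cc j)‖ := norm_add_le _ _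
          _ ≤ (μ/6+μ/2) + (μ/6+μ/2) := by rw [hrev]; exact add_le_add hi3 hj3
      linarith
    have hunionN : (⋃ i : Fin k, S i) ⊆ N := Set.iUnion_subset hSN
    have hkey : min (1/4 : ℝ) (M₂/12) * (b-a) ≤ (k:ℝ) * μ/3 := by
      by_cases hsplit : b - a ≤ 4*μ/3
      · have hk1' : (1:ℝ) ≤ k := by exact_mod_cast hk1
        linarith [mul_le_mul hK4 hsplit hba.le (by norm_num : (0:ℝ) ≤ 1/4),
          mul_le_mul_of_nonneg_right hk1' hμ.le]
      · push_neg at hsplit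
        have h1 : ((b - a - 2*μ/3) * M₂ / (2*μ)) * μ ≤ (k:ℝ) * μ :=
          mul_le_mul_of_nonneg_right hkX2.le hμ.le
        have h2 : ((b - a - 2*μ/3) * M₂ / (2*μ)) * μ = (b - a - 2*μ/3) * M₂ / 2 := by
          field_simp
        have h3 : (b-a)/2 ≤ b - a - 2*μ/3 := by linarith
        have h4 : (b-a)/2 * M₂ ≤ (b - a - 2*μ/3) * M₂ :=
          mul_le_mul_of_nonneg_right h3 hM₂.le
        have h5 : min (1/4 : ℝ) (M₂/12) * (b-a) ≤ M₂/12 * (b-a) :=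
          mul_le_mul_of_nonneg_right hK12 (by linarith)
        linarith
    calc ENNReal.ofReal (min (1/4) (M₂/12) / ((m+1:ℝ)+1)^(m+1) * μ ^ m * ‖γ b - γ a‖)
        ≤ ENNReal.ofReal ((k:ℝ) * ((2*(μ/6)) * (2*(μ/2)/Real.sqrt (m+1))^m)) := by
          apply ENNReal.ofReal_le_ofReal
          have hrw : (2*(μ/6) : ℝ) * (2*(μ/2)/Real.sqrt (m+1))^m
              = (μ/3) * (μ^m / (Real.sqrt (m+1))^m) := by
            rw [show (2*(μ/2):ℝ) = μ by ring, div_pow]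
            ring
          rw [hrw]
          calc min (1/4) (M₂/12) / ((m+1:ℝ)+1)^(m+1) * μ ^ m * ‖γ b - γ a‖
              ≤ min (1/4) (M₂/12) / (Real.sqrt (m+1))^m * μ ^ m * (b - a) :=
                mul_le_mul (mul_le_mul hC le_rfl (pow_nonneg hμ.le m)
                  (div_nonneg hK0.le hs0.le)) hchord (norm_nonneg _)
                  (mul_nonneg (div_nonneg hK0.le hs0.le) (pow_nonneg hμ.le m))
            _ = (min (1/4 : ℝ) (M₂/12) * (b-a)) * μ^m / (Real.sqrt (m+1))^m := by ring
            _ ≤ ((k:ℝ) * μ/3) * μ^m / (Real.sqrt (m+1))^m :=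
                (div_le_div_iff_of_pos_right hs0).2
                  (mul_le_mul_of_nonneg_right hkey (pow_nonneg hμ.le m))
            _ = (k:ℝ) * ((μ/3) * (μ^m / (Real.sqrt (m+1))^m)) := by ring
      _ ≤ volume (⋃ i : Fin k, S i) := by
          rw [measure_iUnion (fun i j hij => hdisj i j hij) hSm, tsum_fintype]
          calc ENNReal.ofReal ((k:ℝ) * ((2*(μ/6)) * (2*(μ/2)/Real.sqrt (m+1))^m))
              = (k : ℝ≥0∞) * ENNReal.ofReal ((2*(μ/6)) * (2*(μ/2)/Real.sqrt (m+1))^m) := by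
                rw [ENNReal.ofReal_mul (Nat.cast_nonneg k), ENNReal.ofReal_natCast]
            _ = ∑ _i : Fin k, ENNReal.ofReal ((2*(μ/6)) * (2*(μ/2)/Real.sqrt (m+1))^m) := by
                rw [Finset.sum_const, Finset.card_univ, Fintype.card_fin, nsmul_eq_mul]
            _ ≤ ∑ i, volume (S i) := Finset.sum_le_sum fun i _ => hSv i
      _ ≤ volume N := measure_mono hunionN
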